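/- arXiv:2309.10194 — 5 statements merged into one kernel-verified Lean document; each statement's English description precedes it below -/
import Mathlib

section
/- Let N ≥ 2 and let X_1, …, X_N be real samples with minimum X_(1) strictly less than maximum X_(N). For every x ∈ ℝ, the kernel density integral transform converges to min-max scaling as the bandwidth grows: lim_{h→∞} F̂^KDI_N(x; h) = Ŝ_N(x). -/
open MeasureTheory Filter

/-- The Gaussian kernel `K(z) = exp(-z²/2)/√(2π)`. -/
noncomputable def gaussKernel (z : ℝ) : ℝ := Real.exp (-z ^ 2 / 2) / Real.sqrt (2 * Real.pi)

/-- The Gaussian kernel density estimator with bandwidth `h` for samples `X`. -/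
noncomputable def kde (N : ℕ) (X : Fin N → ℝ) (h x : ℝ) : ℝ :=
  (1 / (N * h)) * ∑ n, gaussKernel ((x - X n) / h)

/-- `P_h(a,b) = ∫_a^b f̂_h(t) dt`. -/
noncomputable def kdeMass (N : ℕ) (X : Fin N → ℝ) (h a b : ℝ) : ℝ :=
  ∫ t in a..b, kde N X h t

/-- The kernel density integral transform, where `a` is the sample minimum and `b`
the sample maximum. -/
noncomputable def kdi (N : ℕ) (X : Fin N → ℝ) (a b h x : ℝ) : ℝ :=
  if x < a then 0
  else if x < b then kdeMass N X h a x / kdeMass N X h a b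
  else 1

/-- Min-max scaling, where `a` is the sample minimum and `b` the sample maximum. -/
noncomputable def minmax (a b x : ℝ) : ℝ :=
  if x ≤ a then 0
  else if x ≤ b then (x - a) / (b - a)
  else 1

lemma exp_cont (c h : ℝ) : Continuous (fun t : ℝ => Real.exp (-((t - c)/h)^2/2)) := by
  fun_prop

lemma aux_tendsto (a b c y : ℝ) (hay : a ≤ y) (hyb : y ≤ b) (hca : a ≤ c) (hcb : c ≤ b) :
    Tendsto (fun h : ℝ => ∫ t in a..y, Real.exp (-((t - c)/h)^2/2)) atTop (nhds (y - a)) := by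
  have hL : Tendsto (fun h : ℝ => (y - a) * Real.exp (-((b-a)/h)^2/2)) atTop (nhds (y - a)) := by
    have h1 : Tendsto (fun h : ℝ => -((b-a)/h)^2/2) atTop (nhds 0) := by
      have h0 : Tendsto (fun h : ℝ => (b-a)/h) atTop (nhds 0) :=
        tendsto_const_nhds.div_atTop tendsto_id
      have := ((h0.pow 2).neg).div_const 2
      simpa using this
    have h2 := (Real.continuous_exp.tendsto 0).comp h1
    simp only [Real.exp_zero] at h2
    simpa using tendsto_const_nhds.mul h2
  apply tendsto_of_tendsto_of_tendsto_of_le_of_le' hL tendsto_const_nhds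
  · filter_upwards [eventually_gt_atTop (0:ℝ)] with h hh
    have hint : (y - a) * Real.exp (-((b-a)/h)^2/2)
        = ∫ t in a..y, Real.exp (-((b-a)/h)^2/2) := by
      simp [smul_eq_mul]
    rw [hint]
    apply intervalIntegral.integral_mono_on hay
      (intervalIntegrable_const) ((exp_cont c h).intervalIntegrable a y)
    intro t ht
    apply Real.exp_le_exp.mpr
    have h2 : (t - c)^2 ≤ (b - a)^2 := by
      have := ht.1; have := ht.2
      nlinarith
    have : ((t-c)/h)^2 ≤ ((b-a)/h)^2 := by
      rw [div_pow, div_pow]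
      gcongr
    linarith
  · filter_upwards [eventually_gt_atTop (0:ℝ)] with h hh
    calc (∫ t in a..y, Real.exp (-((t - c)/h)^2/2)) ≤ ∫ t in a..y, (1:ℝ) := by
          apply intervalIntegral.integral_mono_on hay
            ((exp_cont c h).intervalIntegrable a y) intervalIntegrable_const
          intro t ht
          apply Real.exp_le_one_iff.mpr
          nlinarith [sq_nonneg ((t-c)/h)]
      _ = y - a := by simp

/-- As the bandwidth `h → ∞`, the kernel density integral transform converges
pointwise to min-max scaling. -/
theorem kdi_tendsto_minmax_atTop (N : ℕ) (hN : 2 ≤ N) (X : Fin N → ℝ) (a b : ℝ)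
    (ha : ∃ n, X n = a) (hb : ∃ n, X n = b) (hbd : ∀ n, a ≤ X n ∧ X n ≤ b)
    (hab : a < b) (x : ℝ) :
    Tendsto (fun h => kdi N X a b h x) atTop (nhds (minmax a b x)) := by
  have hS : (0:ℝ) < Real.sqrt (2 * Real.pi) := Real.sqrt_pos.mpr (by positivity)
  have hNpos : (0:ℝ) < N := by positivity
  rcases lt_or_ge x a with hxa | hax
  · have hm : minmax a b x = 0 := by unfold minmax; rw [if_pos hxa.le]
    have hk : (fun h => kdi N X a b h x) = fun _ => 0 := by
      funext h; unfold kdi; rw [if_pos hxa]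
    rw [hm, hk]; exact tendsto_const_nhds
  rcases le_or_gt b x with hbx | hxb
  · have hm : minmax a b x = 1 := by
      unfold minmax
      rcases lt_or_eq_of_le hbx with h1 | h1
      · rw [if_neg (by linarith), if_neg (by linarith)]
      · rw [if_neg (by linarith), if_pos (by linarith)]
        rw [← h1]; exact div_self (sub_ne_zero.mpr hab.ne')
    have hk : (fun h => kdi N X a b h x) = fun _ => 1 := by
      funext h; unfold kdi; rw [if_neg (by linarith), if_neg (by linarith)]
    rw [hm, hk]; exact tendsto_const_nhds
  -- main case : a ≤ x < b
  have hm : minmax a b x = (x - a) / (b - a) := by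
    unfold minmax
    split_ifs with h1 h2
    · have hxa : x = a := le_antisymm h1 hax
      simp [hxa]
    · rfl
    · linarith
  rw [hm]
  set G : ℝ → ℝ → ℝ := fun y h => ∑ n, ∫ t in a..y, Real.exp (-((t - X n)/h)^2/2) with hG
  have hGlim : ∀ y, a ≤ y → y ≤ b → Tendsto (G y) atTop (nhds (N * (y - a))) := by
    intro y h1 h2
    have := tendsto_finset_sum (Finset.univ : Finset (Fin N))
      (fun n _ => aux_tendsto a b (X n) y h1 h2 (hbd n).1 (hbd n).2)
    rw [show (N:ℝ) * (y - a) = ∑ _n : Fin N, (y - a) by simp [Finset.sum_const, nsmul_eq_mul, mul_sub]]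
    exact this
  have hkey : Tendsto (fun h => G x h / G b h) atTop (nhds ((x - a)/(b - a))) := by
    have hd : (N:ℝ) * (b - a) ≠ 0 := (mul_pos hNpos (by linarith)).ne'
    have := (hGlim x hax hxb.le).div (hGlim b hab.le le_rfl) hd
    have heq : (N:ℝ) * (x - a) / ((N:ℝ) * (b - a)) = (x - a)/(b - a) :=
      mul_div_mul_left _ _ hNpos.ne'
    rwa [heq] at this
  apply hkey.congr'
  filter_upwards [eventually_gt_atTop (0:ℝ)] with h hh
  have hmass : ∀ y, kdeMass N X h a y = (1 / (N * h * Real.sqrt (2 * Real.pi))) * G y h := by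
    intro y
    unfold kdeMass kde gaussKernel
    rw [intervalIntegral.integral_const_mul]
    rw [intervalIntegral.integral_finset_sum (fun n _ =>
      ((exp_cont (X n) h).div_const _).intervalIntegrable a y)]
    simp only [hG]
    rw [Finset.sum_congr rfl (fun n _ => intervalIntegral.integral_div _ _), ← Finset.sum_div]
    field_simp
    try ring
  have hc : (1 / ((N:ℝ) * h * Real.sqrt (2 * Real.pi))) ≠ 0 := by positivity
  unfold kdi
  rw [if_neg (by linarith), if_pos hxb, hmass x, hmass b,
    mul_div_mul_left _ _ hc]
end

section
/- Let N ≥ 2 and let X_1, …, X_N be real samples with X_(1) < X_(N). For every fixed x ∈ ℝ, the Gaussian KDE density normalized by its mass on [X_(1), X_(N)] converges pointwise to the uniform density as the bandwidth grows: lim_{h→∞} f̂_h(x)/P_h(X_(1), X_(N)) = 1/(X_(N) − X_(1)). -/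
open MeasureTheory Filter

lemma gauss_cont : Continuous gaussKernel := by
  unfold gaussKernel
  fun_prop

lemma gauss_pos (z : ℝ) : 0 < gaussKernel z :=
  div_pos (Real.exp_pos _) (Real.sqrt_pos.2 (by positivity))

lemma gauss_le (z : ℝ) : gaussKernel z ≤ gaussKernel 0 := by
  unfold gaussKernel
  have h1 : Real.exp (-z ^ 2 / 2) ≤ Real.exp (-(0:ℝ) ^ 2 / 2) :=
    Real.exp_le_exp.2 (by nlinarith [sq_nonneg z])
  exact div_le_div_of_nonneg_right h1 (Real.sqrt_nonneg _)

lemma tendsto_div_gauss (y : ℝ) :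
    Tendsto (fun h : ℝ => gaussKernel (y / h)) atTop (nhds (gaussKernel 0)) := by
  have h1 : Tendsto (fun h : ℝ => y / h) atTop (nhds 0) :=
    Tendsto.div_atTop tendsto_const_nhds tendsto_id
  exact (gauss_cont.continuousAt.tendsto).comp h1

lemma tendsto_integral_gauss (a b c : ℝ) :
    Tendsto (fun h : ℝ => ∫ t in a..b, gaussKernel ((t - c) / h)) atTop
      (nhds ((b - a) * gaussKernel 0)) := by
  have : ((b - a) * gaussKernel 0) = ∫ _ in a..b, gaussKernel 0 := by
    simp [intervalIntegral.integral_const, smul_eq_mul]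
  rw [this]
  apply intervalIntegral.tendsto_integral_filter_of_dominated_convergence
    (fun _ => gaussKernel 0)
  · filter_upwards with h
    exact (gauss_cont.comp (by fun_prop)).aestronglyMeasurable
  · filter_upwards with h
    filter_upwards with t _
    rw [Real.norm_eq_abs, abs_of_pos (gauss_pos _)]
    exact gauss_le _
  · exact intervalIntegrable_const
  · filter_upwards with t _
    exact tendsto_div_gauss (t - c)

/-- As the bandwidth `h → ∞`, the Gaussian KDE density normalized by its mass on
`[X_(1), X_(N)]` converges pointwise to the uniform density `1/(X_(N) - X_(1))`. -/
theorem kde_normalized_tendsto_uniform (N : ℕ) (hN : 2 ≤ N) (X : Fin N → ℝ) (a b : ℝ)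
    (ha : ∃ n, X n = a) (hb : ∃ n, X n = b) (hbd : ∀ n, a ≤ X n ∧ X n ≤ b)
    (hab : a < b) (x : ℝ) :
    Tendsto (fun h => kde N X h x / kdeMass N X h a b) atTop (nhds (1 / (b - a))) := by
  have hK0 : (0 : ℝ) < gaussKernel 0 := gauss_pos 0
  have hNpos : (0 : ℝ) < N := by positivity
  set A : ℝ → ℝ := fun h => ∑ n, gaussKernel ((x - X n) / h) with hA
  set B : ℝ → ℝ := fun h => ∑ n, ∫ t in a..b, gaussKernel ((t - X n) / h) with hB
  have hsum : ∀ c : ℝ, (∑ _n : Fin N, c) = (N : ℝ) * c := fun c => by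
    simp [Finset.sum_const]
  have hAlim : Tendsto A atTop (nhds ((N : ℝ) * gaussKernel 0)) := by
    rw [← hsum]
    exact tendsto_finset_sum _ fun n _ => tendsto_div_gauss (x - X n)
  have hBlim : Tendsto B atTop (nhds ((N : ℝ) * ((b - a) * gaussKernel 0))) := by
    rw [← hsum]
    exact tendsto_finset_sum _ fun n _ => tendsto_integral_gauss a b (X n)
  have hBne : (N : ℝ) * ((b - a) * gaussKernel 0) ≠ 0 :=
    ne_of_gt (mul_pos hNpos (mul_pos (sub_pos.2 hab) hK0))
  have key : Tendsto (fun h => A h / B h) atTop (nhds (1 / (b - a))) := by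
    have := hAlim.div hBlim hBne
    convert this using 2
    rfl
    rw [mul_div_mul_left _ _ (ne_of_gt hNpos), div_mul_eq_div_div, div_right_comm,
      div_self (ne_of_gt hK0)]
  apply key.congr'
  filter_upwards [eventually_gt_atTop (0 : ℝ)] with h hh
  have hmass : kdeMass N X h a b = (1 / (N * h)) * B h := by
    unfold kdeMass kde
    rw [intervalIntegral.integral_const_mul, hB,
      intervalIntegral.integral_finset_sum]
    intro n _
    exact ((gauss_cont.comp (by fun_prop)).intervalIntegrable a b)
  have hne : (1 : ℝ) / (N * h) ≠ 0 := by positivity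
  rw [hmass]
  unfold kde
  rw [mul_div_mul_left _ _ hne]
end

section
/- Let X_1, …, X_N be real samples and let x ∈ ℝ with x ≠ X_n for all n. Then the Gaussian KDE c.d.f. converges to the empirical c.d.f. at x as the bandwidth vanishes: lim_{h→0⁺} ∫_{−∞}^x f̂_h(t) dt = F̂_N(x). -/
open MeasureTheory Filter

section GaussAux

open Real

lemma gaussKernel_eq :
    gaussKernel = fun z => (Real.sqrt (2 * Real.pi))⁻¹ * Real.exp (-(1/2) * z ^ 2) := by
  funext z
  rw [gaussKernel, div_eq_inv_mul]
  ring_nf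

lemma gaussKernel_integrable : Integrable gaussKernel := by
  rw [gaussKernel_eq]
  exact (integrable_exp_neg_mul_sq (by norm_num)).const_mul _

lemma gaussKernel_integral : ∫ z, gaussKernel z = 1 := by
  rw [gaussKernel_eq]
  rw [integral_const_mul, integral_gaussian]
  rw [show Real.pi / (1/2) = 2 * Real.pi by ring]
  rw [inv_mul_cancel₀]
  positivity

/-- The standard Gaussian c.d.f. -/
noncomputable def gaussCDF (y : ℝ) : ℝ := ∫ z in Set.Iic y, gaussKernel z

lemma gaussCDF_atTop : Tendsto gaussCDF atTop (nhds 1) := by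
  have := (aecover_Iic (μ := volume) (l := atTop) (b := fun c : ℝ => c)
    tendsto_id).integral_tendsto_of_countably_generated gaussKernel_integrable
  rwa [gaussKernel_integral] at this

lemma gaussCDF_atBot : Tendsto gaussCDF atBot (nhds 0) := by
  have h2 := (aecover_Ioi (μ := volume) (l := atBot) (a := fun c : ℝ => c)
    tendsto_id).integral_tendsto_of_countably_generated gaussKernel_integrable
  rw [gaussKernel_integral] at h2
  have heq : ∀ c : ℝ, gaussCDF c = 1 - ∫ z in Set.Ioi c, gaussKernel z := by
    intro c
    have := intervalIntegral.integral_Iic_add_Ioi (b := c) (f := gaussKernel) (μ := volume)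
      gaussKernel_integrable.integrableOn gaussKernel_integrable.integrableOn
    rw [gaussKernel_integral] at this
    rw [gaussCDF]
    linarith
  have h3 : Tendsto (fun c : ℝ => 1 - ∫ z in Set.Ioi c, gaussKernel z) atBot (nhds (1 - 1)) :=
    tendsto_const_nhds.sub h2
  rw [show (1:ℝ) - 1 = 0 by ring] at h3
  exact h3.congr (fun c => (heq c).symm)

lemma gauss_shift {h : ℝ} (hh : 0 < h) (c x : ℝ) :
    ∫ t in Set.Iic x, gaussKernel ((t - c) / h) = h * gaussCDF ((x - c) / h) := by
  set G : ℝ → ℝ := Set.indicator (Set.Iic ((x - c) / h)) gaussKernel with hG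
  have hiff : ∀ t : ℝ, (t - c) / h ≤ (x - c) / h ↔ t ≤ x := by
    intro t
    rw [div_le_div_iff_of_pos_right hh, sub_le_sub_iff_right]
  have key : ∀ t : ℝ, Set.indicator (Set.Iic x) (fun t => gaussKernel ((t - c) / h)) t
      = G ((t - c) / h) := by
    intro t
    simp only [hG, Set.indicator_apply, Set.mem_Iic, hiff t]
  calc ∫ t in Set.Iic x, gaussKernel ((t - c) / h)
      = ∫ t, G ((t - c) / h) := by
        rw [← MeasureTheory.integral_indicator measurableSet_Iic]
        simp_rw [key]
    _ = ∫ u, G (u / h) := integral_sub_right_eq_self (fun u => G (u / h)) c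
    _ = |h| • ∫ z, G z := MeasureTheory.Measure.integral_comp_div G h
    _ = h * gaussCDF ((x - c) / h) := by
        rw [MeasureTheory.integral_indicator measurableSet_Iic, smul_eq_mul, abs_of_pos hh]; rfl

end GaussAux

/-- At any point `x` that is not a sample point, the Gaussian KDE c.d.f. converges to
the empirical c.d.f. `F̂_N(x) = (1/N) Σ_n 1{X_n ≤ x}` as the bandwidth `h → 0⁺`. -/
theorem kde_cdf_tendsto_ecdf (N : ℕ) (hN : 1 ≤ N) (X : Fin N → ℝ)
    (x : ℝ) (hx : ∀ n, x ≠ X n) :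
    Tendsto (fun h => ∫ t in Set.Iic x, kde N X h t)
      (nhdsWithin 0 (Set.Ioi 0))
      (nhds ((1 / N) * ∑ n, if X n ≤ x then (1 : ℝ) else 0)) := by
  have hN0 : (N : ℝ) ≠ 0 := by
    exact_mod_cast Nat.one_le_iff_ne_zero.mp hN
  apply Tendsto.congr' (f₁ := fun h => (1 / N) * ∑ n, gaussCDF ((x - X n) / h))
  · filter_upwards [self_mem_nhdsWithin] with h hh
    rw [Set.mem_Ioi] at hh
    unfold kde
    rw [MeasureTheory.integral_const_mul]
    rw [MeasureTheory.integral_finset_sum _ (fun n _ =>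
      ((gaussKernel_integrable.comp_div hh.ne').comp_sub_right (X n)).integrableOn)]
    simp_rw [fun n : Fin N => gauss_shift hh (X n) x]
    rw [← Finset.mul_sum]
    field_simp
  · apply Tendsto.const_mul
    apply tendsto_finset_sum
    intro n _
    rcases lt_or_gt_of_ne (hx n) with hlt | hgt
    · rw [if_neg (not_le.mpr hlt)]
      apply gaussCDF_atBot.comp
      have : Tendsto (fun h : ℝ => (x - X n) * h⁻¹) (nhdsWithin 0 (Set.Ioi 0)) atBot :=
        (tendsto_const_mul_atBot_of_neg (by linarith)).mpr tendsto_inv_nhdsGT_zero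
      exact this.congr (fun h => (div_eq_mul_inv _ _).symm)
    · rw [if_pos hgt.le]
      apply gaussCDF_atTop.comp
      have : Tendsto (fun h : ℝ => (x - X n) * h⁻¹) (nhdsWithin 0 (Set.Ioi 0)) atTop :=
        Tendsto.const_mul_atTop (by linarith) tendsto_inv_nhdsGT_zero
      exact this.congr (fun h => (div_eq_mul_inv _ _).symm)
end

section
/- Let N ≥ 2 and let X_1, …, X_N be pairwise distinct real samples with order statistics X_(1) < X_(2) < … < X_(N). Then for every index 1 ≤ r ≤ N, the small-bandwidth limit of the KD-integral transform evaluated at the r-th order statistic is lim_{h→0⁺} F̂^KDI_N(X_(r); h) = (r − 1)/(N − 1). -/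
open MeasureTheory Filter Topology

namespace KDIAux

lemma gaussKernel_eq :
    gaussKernel = fun z => Real.exp (-(1/2) * z ^ 2) / Real.sqrt (2 * Real.pi) := by
  funext z
  unfold gaussKernel
  ring_nf

lemma gaussKernel_integrable : Integrable gaussKernel := by
  rw [gaussKernel_eq]
  exact (integrable_exp_neg_mul_sq (by norm_num)).div_const _

lemma gaussKernel_continuous : Continuous gaussKernel := by
  unfold gaussKernel
  fun_prop

lemma sqrt_two_pi_pos : 0 < Real.sqrt (2 * Real.pi) :=
  Real.sqrt_pos.2 (by positivity)

lemma integral_gaussKernel : ∫ u, gaussKernel u = 1 := by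
  rw [gaussKernel_eq, integral_div, integral_gaussian,
    show Real.pi / (1/2) = 2 * Real.pi by ring]
  exact div_self sqrt_two_pi_pos.ne'

lemma integral_gaussKernel_Ioi : ∫ u in Set.Ioi (0:ℝ), gaussKernel u = 1/2 := by
  rw [gaussKernel_eq, integral_div, integral_gaussian_Ioi,
    show Real.pi / (1/2) = 2 * Real.pi by ring, div_right_comm,
    div_self sqrt_two_pi_pos.ne']

lemma integral_gaussKernel_Iic : ∫ u in Set.Iic (0:ℝ), gaussKernel u = 1/2 := by
  have h := intervalIntegral.integral_Iic_add_Ioi (b := (0:ℝ)) (μ := volume)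
    gaussKernel_integrable.integrableOn gaussKernel_integrable.integrableOn
  rw [integral_gaussKernel, integral_gaussKernel_Ioi] at h
  linarith

/-- `G w = ∫_0^w K`. -/
noncomputable def G (w : ℝ) : ℝ := ∫ u in (0:ℝ)..w, gaussKernel u

lemma G_zero : G 0 = 0 := intervalIntegral.integral_same

lemma G_atTop : Tendsto G atTop (𝓝 (1/2)) := by
  have h := intervalIntegral_tendsto_integral_Ioi (μ := volume) (l := atTop) 0
    gaussKernel_integrable.integrableOn tendsto_id
  rw [integral_gaussKernel_Ioi] at h
  exact h

lemma G_atBot : Tendsto G atBot (𝓝 (-(1/2))) := by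
  have h := intervalIntegral_tendsto_integral_Iic (μ := volume) (l := atBot) 0
    gaussKernel_integrable.integrableOn tendsto_id
  rw [integral_gaussKernel_Iic] at h
  have heq : G = fun w => -∫ u in w..(0:ℝ), gaussKernel u := by
    funext w
    rw [G, intervalIntegral.integral_symm]
  rw [heq]
  exact h.neg

/-- half of the sign of `c`. -/
noncomputable def sgnHalf (c : ℝ) : ℝ := if 0 < c then 1/2 else if c = 0 then 0 else -(1/2)

lemma tendsto_G_div (c : ℝ) :
    Tendsto (fun h : ℝ => G (c / h)) (nhdsWithin 0 (Set.Ioi 0)) (𝓝 (sgnHalf c)) := by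
  rcases lt_trichotomy 0 c with hc | hc | hc
  · simp only [sgnHalf]
    rw [if_pos hc]
    apply G_atTop.comp
    have h1 : Tendsto (fun h : ℝ => c * h⁻¹) (nhdsWithin 0 (Set.Ioi 0)) atTop :=
      Tendsto.const_mul_atTop hc tendsto_inv_nhdsGT_zero
    exact h1.congr (fun h => (div_eq_mul_inv c h).symm)
  · simp only [sgnHalf]
    rw [if_neg (by simp [← hc]), if_pos hc.symm]
    simp only [← hc, zero_div, G_zero]
    exact tendsto_const_nhds
  · simp only [sgnHalf]
    rw [if_neg (by linarith), if_neg (by linarith)]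
    apply G_atBot.comp
    have h1 : Tendsto (fun h : ℝ => c * h⁻¹) (nhdsWithin 0 (Set.Ioi 0)) atBot :=
      Tendsto.const_mul_atTop_of_neg hc tendsto_inv_nhdsGT_zero
    exact h1.congr (fun h => (div_eq_mul_inv c h).symm)

lemma kdeMass_eq (N : ℕ) (X : Fin N → ℝ) {h : ℝ} (hh : 0 < h) (hN : (N:ℝ) ≠ 0) (a b : ℝ) :
    kdeMass N X h a b = (1/(N:ℝ)) * ∑ n, (G ((b - X n)/h) - G ((a - X n)/h)) := by
  have hint : ∀ n : Fin N, IntervalIntegrable (fun t => gaussKernel ((t - X n)/h)) volume a b :=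
    fun n => (gaussKernel_continuous.comp (by fun_prop)).intervalIntegrable a b
  have key : ∀ n : Fin N, (∫ t in a..b, gaussKernel ((t - X n)/h))
      = h * (G ((b - X n)/h) - G ((a - X n)/h)) := by
    intro n
    have h1 : (∫ t in a..b, gaussKernel ((t - X n)/h))
        = ∫ t in (a - X n)..(b - X n), gaussKernel (t/h) :=
      intervalIntegral.integral_comp_sub_right (fun t => gaussKernel (t/h)) (X n)
    have h2 : (∫ t in (a - X n)..(b - X n), gaussKernel (t/h))
        = h • ∫ t in (a - X n)/h..(b - X n)/h, gaussKernel t :=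
      intervalIntegral.integral_comp_div (f := gaussKernel) hh.ne'
    have h3 : G ((b - X n)/h) - G ((a - X n)/h)
        = ∫ t in (a - X n)/h..(b - X n)/h, gaussKernel t :=
      intervalIntegral.integral_interval_sub_left
        gaussKernel_integrable.intervalIntegrable
        gaussKernel_integrable.intervalIntegrable
    rw [h1, h2, h3, smul_eq_mul]
  unfold kdeMass kde
  rw [intervalIntegral.integral_const_mul, intervalIntegral.integral_finset_sum (fun n _ => hint n)]
  rw [Finset.sum_congr rfl (fun n _ => key n), ← Finset.mul_sum]
  field_simp

lemma sum_range_piecewise (N i : ℕ) (hi : i < N) :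
    ∑ k ∈ Finset.range N, (if k < i then (1/2:ℝ) else if k = i then 0 else -(1/2))
      = (i : ℝ) - ((N:ℝ) - 1)/2 := by
  induction N with
  | zero => exact absurd hi (Nat.not_lt_zero i)
  | succ M ih =>
    rw [Finset.sum_range_succ]
    rcases Nat.lt_or_ge i M with him | him
    · rw [ih him, if_neg (by omega), if_neg (by omega)]
      push_cast
      ring
    · have hiM : i = M := by omega
      subst hiM
      rw [if_neg (lt_irrefl _), if_pos rfl]
      rw [Finset.sum_congr rfl (fun k hk => if_pos (Finset.mem_range.1 hk)),
        Finset.sum_const, Finset.card_range]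
      push_cast
      ring

lemma sum_sgnHalf {N : ℕ} (X : Fin N → ℝ) (hX : StrictMono X) (i : Fin N) :
    ∑ n, sgnHalf (X i - X n) = (i : ℝ) - ((N:ℝ) - 1)/2 := by
  have key : ∀ n : Fin N, sgnHalf (X i - X n)
      = if (n:ℕ) < (i:ℕ) then (1/2:ℝ) else if (n:ℕ) = (i:ℕ) then 0 else -(1/2) := by
    intro n
    rcases lt_trichotomy (n:ℕ) (i:ℕ) with hn | hn | hn
    · simp only [sgnHalf]
      rw [if_pos hn, if_pos (sub_pos.2 (hX (show n < i from hn)))]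
    · have : n = i := Fin.ext hn
      subst this
      simp [sgnHalf]
    · have hlt : X i < X n := hX (show i < n from hn)
      simp only [sgnHalf]
      rw [if_neg (show ¬(0:ℝ) < X i - X n by linarith),
        if_neg (show ¬(X i - X n = 0) by intro hh; linarith),
        if_neg (show ¬((n:ℕ) < (i:ℕ)) by omega),
        if_neg (show ¬((n:ℕ) = (i:ℕ)) by omega)]
  rw [Finset.sum_congr rfl (fun n _ => key n)]
  rw [Fin.sum_univ_eq_sum_range
    (fun k => if k < (i:ℕ) then (1/2:ℝ) else if k = (i:ℕ) then 0 else -(1/2)) N]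
  exact sum_range_piecewise N i i.isLt

lemma kdeMass_tendsto (N : ℕ) (hN : (N:ℝ) ≠ 0) (X : Fin N → ℝ) (a b : ℝ) :
    Tendsto (fun h => kdeMass N X h a b) (nhdsWithin 0 (Set.Ioi 0))
      (𝓝 ((1/(N:ℝ)) * ∑ n, (sgnHalf (b - X n) - sgnHalf (a - X n)))) := by
  have heq : ∀ᶠ h in nhdsWithin (0:ℝ) (Set.Ioi 0),
      (1/(N:ℝ)) * ∑ n, (G ((b - X n)/h) - G ((a - X n)/h)) = kdeMass N X h a b := by
    filter_upwards [self_mem_nhdsWithin] with h hh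
    exact (kdeMass_eq N X hh hN a b).symm
  refine Tendsto.congr' heq ?_
  exact tendsto_const_nhds.mul (tendsto_finset_sum _
    (fun n _ => (tendsto_G_div _).sub (tendsto_G_div _)))

end KDIAux

open KDIAux in
/-- For pairwise distinct samples `X_(1) < … < X_(N)` (here `X` is strictly monotone,
so `X ⟨i⟩` is the `(i+1)`-th order statistic), for every `1 ≤ r ≤ N`, the
small-bandwidth limit of the KD-integral transform evaluated at the `r`-th order
statistic is `(r - 1)/(N - 1)`. -/
theorem kdi_tendsto_at_order_stat (N : ℕ) (hN : 2 ≤ N) (X : Fin N → ℝ)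
    (hX : StrictMono X) (r : ℕ) (hr1 : 1 ≤ r) (hr2 : r ≤ N) :
    Tendsto (fun h => kdi N X (X ⟨0, by omega⟩) (X ⟨N - 1, by omega⟩) h
        (X ⟨r - 1, by omega⟩))
      (nhdsWithin 0 (Set.Ioi 0))
      (nhds (((r : ℝ) - 1) / ((N : ℝ) - 1))) := by
  have h2N : (2:ℝ) ≤ (N:ℝ) := by exact_mod_cast hN
  have hN0 : (N:ℝ) ≠ 0 := by intro h; linarith
  have hN1 : (N:ℝ) - 1 ≠ 0 := by intro h; linarith
  have hxa : ¬ X ⟨r - 1, by omega⟩ < X ⟨0, by omega⟩ :=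
    not_lt.2 (hX.monotone (by simp [Fin.mk_le_mk]))
  have hsum : ∀ i : Fin N,
      (1/(N:ℝ)) * ∑ n, (sgnHalf (X i - X n) - sgnHalf (X ⟨0, by omega⟩ - X n))
        = (i : ℝ) / N := by
    intro i
    rw [Finset.sum_sub_distrib, sum_sgnHalf X hX, sum_sgnHalf X hX]
    simp only [Fin.val_mk, Nat.cast_zero]
    ring
  have hcast : (((⟨r - 1, by omega⟩ : Fin N) : ℕ) : ℝ) = (r : ℝ) - 1 := by
    simp only [Fin.val_mk]
    push_cast [hr1]
    ring
  rcases eq_or_lt_of_le hr2 with hrN | hrN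
  · -- r = N : the transform is constantly 1
    have hidx : (⟨r - 1, by omega⟩ : Fin N) = ⟨N - 1, by omega⟩ := by
      apply Fin.ext; simp; omega
    have hxb : ¬ X ⟨r - 1, by omega⟩ < X ⟨N - 1, by omega⟩ := by
      rw [hidx]; exact lt_irrefl _
    simp only [kdi, if_neg hxa, if_neg hxb]
    have hval : ((r:ℝ) - 1) / ((N:ℝ) - 1) = 1 := by
      rw [div_eq_one_iff_eq hN1, hrN]
    rw [hval]
    exact tendsto_const_nhds
  · -- r < N
    have hxb : X ⟨r - 1, by omega⟩ < X ⟨N - 1, by omega⟩ :=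
      hX (by rw [Fin.mk_lt_mk]; omega)
    simp only [kdi, if_neg hxa, if_pos hxb]
    have hnum := kdeMass_tendsto N hN0 X (X ⟨0, by omega⟩) (X ⟨r - 1, by omega⟩)
    have hden := kdeMass_tendsto N hN0 X (X ⟨0, by omega⟩) (X ⟨N - 1, by omega⟩)
    rw [hsum ⟨r - 1, by omega⟩, hcast] at hnum
    rw [hsum ⟨N - 1, by omega⟩] at hden
    have hcast2 : (((⟨N - 1, by omega⟩ : Fin N) : ℕ) : ℝ) = (N : ℝ) - 1 := by
      simp only [Fin.val_mk]
      push_cast [show 1 ≤ N by omega]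
      ring
    rw [hcast2] at hden
    have hdne : ((N:ℝ) - 1) / N ≠ 0 := div_ne_zero hN1 hN0
    have T := hnum.div hden hdne
    have hval : (((r:ℝ) - 1) / N) / (((N:ℝ) - 1) / N) = ((r:ℝ) - 1) / ((N:ℝ) - 1) := by
      field_simp
    rwa [hval] at T
end

section
/- The order-4 polynomial-exponential kernel with coefficients β_i proportional to 1/i!, namely f(x) = (Σ_{i=0}^{4} |x|^i / i!) · e^{−|x|}, is four times continuously differentiable on ℝ (it is of class C⁴, including at x = 0). -/
open Real Filter Topology

noncomputable def pe0 : ℝ → ℝ :=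
  fun x => (∑ i ∈ Finset.range 5, |x| ^ i / (Nat.factorial i : ℝ)) * Real.exp (-|x|)
noncomputable def pe1 : ℝ → ℝ := fun x => (-(x^3*|x|)/24) * Real.exp (-|x|)
noncomputable def pe2 : ℝ → ℝ := fun x => ((x^4 - 4*x^2*|x|)/24) * Real.exp (-|x|)
noncomputable def pe3 : ℝ → ℝ := fun x => ((8*x^3 - 12*x*|x| - x^3*|x|)/24) * Real.exp (-|x|)
noncomputable def pe4 : ℝ → ℝ :=
  fun x => ((x^4 - 12*x^2*|x| + 36*x^2 - 24*|x|)/24) * Real.exp (-|x|)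

lemma quarticDeriv (a b c d e x D : ℝ)
    (hD : D = b + 2*c*x + 3*d*x^2 + 4*e*x^3) :
    HasDerivAt (fun y : ℝ => a + b * y + c * y ^ 2 + d * y ^ 3 + e * y ^ 4) D x := by
  have h := ((((hasDerivAt_const x a).add ((hasDerivAt_id' (𝕜 := ℝ) x).const_mul b)).add
      ((hasDerivAt_pow 2 x).const_mul c)).add
      ((hasDerivAt_pow 3 x).const_mul d)).add ((hasDerivAt_pow 4 x).const_mul e)
  norm_num at h
  refine h.congr_deriv ?_
  rw [hD]; ring

lemma polyExpNeg (a b c d e x D : ℝ)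
    (hD : D = (b + 2*c*x + 3*d*x^2 + 4*e*x^3 - (a + b*x + c*x^2 + d*x^3 + e*x^4)) * Real.exp (-x)) :
    HasDerivAt (fun y : ℝ => (a + b * y + c * y ^ 2 + d * y ^ 3 + e * y ^ 4) * Real.exp (-y)) D x := by
  have he : HasDerivAt (fun y : ℝ => Real.exp (-y)) (-Real.exp (-x)) x := by
    exact ((Real.hasDerivAt_exp (-x)).comp x (hasDerivAt_neg x)).congr_deriv (by ring)
  have h := (quarticDeriv a b c d e x _ rfl).mul he
  refine h.congr_deriv ?_
  rw [hD]; ring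

lemma polyExpPos (a b c d e x D : ℝ)
    (hD : D = (b + 2*c*x + 3*d*x^2 + 4*e*x^3 + (a + b*x + c*x^2 + d*x^3 + e*x^4)) * Real.exp x) :
    HasDerivAt (fun y : ℝ => (a + b * y + c * y ^ 2 + d * y ^ 3 + e * y ^ 4) * Real.exp y) D x := by
  have h := (quarticDeriv a b c d e x _ rfl).mul (Real.hasDerivAt_exp x)
  refine h.congr_deriv ?_
  rw [hD]; ring

lemma slopeZero {f g : ℝ → ℝ} (hf0 : f 0 = 0) (hg : Continuous g) (hg0 : g 0 = 0)
    (h : ∀ y : ℝ, f y = y * g y) : HasDerivAt f 0 0 := by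
  rw [hasDerivAt_iff_tendsto_slope]
  have ht : Tendsto g (𝓝[≠] (0:ℝ)) (𝓝 0) := by
    simpa [hg0] using ((hg.tendsto 0).mono_left nhdsWithin_le_nhds)
  refine ht.congr' ?_
  filter_upwards [self_mem_nhdsWithin] with y hy
  have hy' : y ≠ 0 := hy
  simp [slope_def_field, hf0, h y]
  field_simp

lemma stepCD {f g : ℝ → ℝ} {n : ℕ} (h : ∀ x, HasDerivAt f (g x) x)
    (hg : ContDiff ℝ n g) : ContDiff ℝ (n + 1 : ℕ) f := by
  have hd : deriv f = g := funext fun x => (h x).deriv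
  have : ContDiff ℝ ((n : WithTop ℕ∞) + 1) f := by
    rw [contDiff_succ_iff_deriv]
    exact ⟨fun x => (h x).differentiableAt, by simp, hd ▸ hg⟩
  simpa [Nat.cast_add] using this

lemma d01 : ∀ x : ℝ, HasDerivAt pe0 (pe1 x) x := by
  intro x
  rcases lt_trichotomy x 0 with hx | rfl | hx
  · have h := polyExpPos 1 (-1) (1/2) (-1/6) (1/24) x (pe1 x)
      (by simp only [pe1]; rw [abs_of_neg hx]; ring_nf)
    refine h.congr_of_eventuallyEq ?_
    filter_upwards [eventually_lt_nhds hx] with y hy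
    simp only [pe0, Finset.sum_range_succ, Finset.sum_range_zero, abs_of_neg hy, Nat.factorial]
    push_cast; ring_nf
  · -- squeeze at 0
    have key : HasDerivAt pe0 0 0 := by
      rw [hasDerivAt_iff_tendsto_slope]
      have hb : ∀ᶠ y in 𝓝[≠] (0:ℝ), ‖slope pe0 0 y‖ ≤ |y|^4 := by
        have h1 : ∀ᶠ y in 𝓝 (0:ℝ), |y| < 1 :=
          (continuous_abs.tendsto' (0:ℝ) 0 abs_zero).eventually (eventually_lt_nhds one_pos)
        filter_upwards [self_mem_nhdsWithin, eventually_nhdsWithin_of_eventually_nhds h1]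
          with y hy hy1
        have hy0 : y ≠ 0 := hy
        have hya : (0:ℝ) < |y| := abs_pos.mpr hy0
        have hbd := Real.exp_bound (x := |y|) (by rw [abs_abs]; exact hy1.le) (n := 5) (by norm_num)
        rw [abs_abs] at hbd
        have hbd' : |Real.exp |y| - ∑ i ∈ Finset.range 5, |y| ^ i / (Nat.factorial i : ℝ)| ≤ |y|^5 := by
          refine le_trans hbd ?_
          have h5 : ((Nat.factorial 5 : ℕ) : ℝ) = 120 := by norm_num [Nat.factorial]
          rw [h5]
          push_cast
          nlinarith [pow_nonneg (abs_nonneg y) 5]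
        have hE1 : Real.exp (-|y|) ≤ 1 := Real.exp_le_one_iff.mpr (by linarith [abs_nonneg y])
        have hnum : |pe0 y - 1| ≤ |y|^5 := by
          have heq : pe0 y - 1 =
              ((∑ i ∈ Finset.range 5, |y| ^ i / (Nat.factorial i : ℝ)) - Real.exp |y|)
                * Real.exp (-|y|) := by
            simp only [pe0]
            rw [sub_mul, Real.exp_neg]
            field_simp
          rw [heq, abs_mul, abs_of_pos (Real.exp_pos _), abs_sub_comm]
          simpa using mul_le_mul hbd' hE1 (Real.exp_pos _).le (pow_nonneg (abs_nonneg y) 5)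
        have hslope : ‖slope pe0 0 y‖ = |pe0 y - 1| / |y| := by
          rw [slope_def_field]
          have : pe0 0 = 1 := by simp [pe0, Finset.sum_range_succ]
          rw [this]
          rw [Real.norm_eq_abs, abs_div]
          simp
        rw [hslope]
        calc |pe0 y - 1| / |y| ≤ |y|^5 / |y| := by gcongr
          _ = |y|^4 := by
              rw [pow_succ, mul_div_assoc, div_self hya.ne', mul_one]
      have hg : Tendsto (fun y : ℝ => |y|^4) (𝓝[≠] (0:ℝ)) (𝓝 0) := by
        have : Continuous (fun y : ℝ => |y|^4) := by fun_prop
        simpa using (this.tendsto 0).mono_left nhdsWithin_le_nhds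
      simpa using squeeze_zero_norm' hb hg
    have : pe1 0 = 0 := by norm_num [pe1]
    rwa [this]
  · have h := polyExpNeg 1 1 (1/2) (1/6) (1/24) x (pe1 x)
      (by simp only [pe1]; rw [abs_of_pos hx]; ring_nf)
    refine h.congr_of_eventuallyEq ?_
    filter_upwards [eventually_gt_nhds hx] with y hy
    simp only [pe0, Finset.sum_range_succ, Finset.sum_range_zero, abs_of_pos hy, Nat.factorial]
    push_cast; ring

lemma d12 : ∀ x : ℝ, HasDerivAt pe1 (pe2 x) x := by
  intro x
  rcases lt_trichotomy x 0 with hx | rfl | hx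
  · have h := polyExpPos 0 0 0 0 (1/24) x (pe2 x)
      (by simp only [pe2]; rw [abs_of_neg hx]; ring_nf)
    refine h.congr_of_eventuallyEq ?_
    filter_upwards [eventually_lt_nhds hx] with y hy
    simp only [pe1, abs_of_neg hy]; ring_nf
  · have key := slopeZero (f := pe1) (g := fun y => (-(y^2*|y|)/24) * Real.exp (-|y|))
      (by norm_num [pe1]) (by fun_prop) (by norm_num)
      (fun y => by simp only [pe1]; ring)
    have : pe2 0 = 0 := by norm_num [pe2]
    rwa [this]
  · have h := polyExpNeg 0 0 0 0 (-1/24) x (pe2 x)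
      (by simp only [pe2]; rw [abs_of_pos hx]; ring_nf)
    refine h.congr_of_eventuallyEq ?_
    filter_upwards [eventually_gt_nhds hx] with y hy
    simp only [pe1, abs_of_pos hy]; ring

lemma d23 : ∀ x : ℝ, HasDerivAt pe2 (pe3 x) x := by
  intro x
  rcases lt_trichotomy x 0 with hx | rfl | hx
  · have h := polyExpPos 0 0 0 (1/6) (1/24) x (pe3 x)
      (by simp only [pe3]; rw [abs_of_neg hx]; ring_nf)
    refine h.congr_of_eventuallyEq ?_
    filter_upwards [eventually_lt_nhds hx] with y hy
    simp only [pe2, abs_of_neg hy]; ring_nf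
  · have key := slopeZero (f := pe2) (g := fun y => ((y^3 - 4*y*|y|)/24) * Real.exp (-|y|))
      (by norm_num [pe2]) (by fun_prop) (by norm_num)
      (fun y => by simp only [pe2]; ring)
    have : pe3 0 = 0 := by norm_num [pe3]
    rwa [this]
  · have h := polyExpNeg 0 0 0 (-1/6) (1/24) x (pe3 x)
      (by simp only [pe3]; rw [abs_of_pos hx]; ring_nf)
    refine h.congr_of_eventuallyEq ?_
    filter_upwards [eventually_gt_nhds hx] with y hy
    simp only [pe2, abs_of_pos hy]; ring

lemma d34 : ∀ x : ℝ, HasDerivAt pe3 (pe4 x) x := by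
  intro x
  rcases lt_trichotomy x 0 with hx | rfl | hx
  · have h := polyExpPos 0 0 (1/2) (1/3) (1/24) x (pe4 x)
      (by simp only [pe4]; rw [abs_of_neg hx]; ring_nf)
    refine h.congr_of_eventuallyEq ?_
    filter_upwards [eventually_lt_nhds hx] with y hy
    simp only [pe3, abs_of_neg hy]; ring_nf
  · have key := slopeZero (f := pe3)
      (g := fun y => ((8*y^2 - 12*|y| - y^2*|y|)/24) * Real.exp (-|y|))
      (by norm_num [pe3]) (by fun_prop) (by norm_num)
      (fun y => by simp only [pe3]; ring)
    have : pe4 0 = 0 := by norm_num [pe4]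
    rwa [this]
  · have h := polyExpNeg 0 0 (-1/2) (1/3) (-1/24) x (pe4 x)
      (by simp only [pe4]; rw [abs_of_pos hx]; ring_nf)
    refine h.congr_of_eventuallyEq ?_
    filter_upwards [eventually_gt_nhds hx] with y hy
    simp only [pe3, abs_of_pos hy]; ring

lemma pe4cont : Continuous pe4 := by
  unfold pe4; fun_prop

/-- The order-4 polynomial-exponential kernel
`f(x) = (Σ_{i=0}^4 |x|^i / i!) · e^{-|x|}` is of class `C⁴` on `ℝ`. -/
theorem polyExpKernel_contDiff_four :
    ContDiff ℝ 4 (fun x : ℝ =>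
      (∑ i ∈ Finset.range 5, |x| ^ i / (Nat.factorial i : ℝ)) * Real.exp (-|x|)) := by
  have h4 : ContDiff ℝ (0 : ℕ) pe4 := contDiff_zero.mpr pe4cont
  have h3 : ContDiff ℝ (1 : ℕ) pe3 := stepCD d34 h4
  have h2 : ContDiff ℝ (2 : ℕ) pe2 := stepCD d23 h3
  have h1 : ContDiff ℝ (3 : ℕ) pe1 := stepCD d12 h2
  have h0 : ContDiff ℝ (4 : ℕ) pe0 := stepCD d01 h1
  exact h0
end
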